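/- Let H be a real inner product space, f : H → H contractive and L-Lipschitz, and consider an s-stage DIRK method with coefficients A = (a_{ij}) lower triangular, b = (b_i), satisfying a_{ii} ≥ 0, b_i ≥ 0, and M = B·A + Aᵀ·B - b·bᵀ positive semidefinite (B = diag(b)). Let z⁽ⁱ⁾ be the exact stages (z⁽ⁱ⁾ = zₙ + Δt·∑_{j≤i} a_{ij}·f(z⁽ʲ⁾)) and y⁽ⁱ⁾ the perturbed stages (y⁽ⁱ⁾ = yₙ + Δt·∑_{j<i} a_{ij}·f(y⁽ʲ⁾) + Δt·a_{ii}·f_ε(y⁽ⁱ⁾)), with ‖f(y⁽ⁱ⁾) - f_ε(y⁽ⁱ⁾)‖ ≤ εᵢ, and outputs z_{n+1} = zₙ + Δt·∑ᵢ bᵢ·f(z⁽ⁱ⁾), y_{n+1} = yₙ + Δt·∑ᵢ bᵢ·f(y⁽ⁱ⁾). Then ‖z_{n+1} - y_{n+1}‖² ≤ ‖zₙ - yₙ‖² + 2·Δt²·L·∑_{i=1}^{s} εᵢ·bᵢ·a_{ii}·‖z⁽ⁱ⁾ - y⁽ⁱ⁾‖. -/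

import Mathlib

open scoped Matrix

open scoped RealInnerProductSpace

lemma gram_psd_aux {H : Type*} [NormedAddCommGroup H] [InnerProductSpace ℝ H]
    {s : ℕ} (M : Matrix (Fin s) (Fin s) ℝ) (hM : M.PosSemidef)
    (d : Fin s → H) : 0 ≤ ∑ i, ∑ j, M i j * ⟪d i, d j⟫ := by
  obtain ⟨B, rfl⟩ : ∃ B : Matrix (Fin s) (Fin s) ℝ, M = Bᴴ * B := by
    open scoped MatrixOrder in
    obtain ⟨B, hB⟩ := CStarAlgebra.nonneg_iff_eq_star_mul_self.mp hM.nonneg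
    exact ⟨B, hB⟩
  have key : ∀ k, ⟪∑ i, B k i • d i, ∑ j, B k j • d j⟫
      = ∑ i, ∑ j, (B k i * B k j) * ⟪d i, d j⟫ := by
    intro k
    rw [sum_inner]
    refine Finset.sum_congr rfl fun i _ => ?_
    rw [inner_sum]
    refine Finset.sum_congr rfl fun j _ => ?_
    rw [real_inner_smul_left, real_inner_smul_right]
    ring
  calc (0:ℝ) ≤ ∑ k, ⟪∑ i, B k i • d i, ∑ j, B k j • d j⟫ :=
        Finset.sum_nonneg fun k _ => real_inner_self_nonneg
    _ = ∑ k, ∑ i, ∑ j, (B k i * B k j) * ⟪d i, d j⟫ :=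
        Finset.sum_congr rfl fun k _ => key k
    _ = ∑ i, ∑ j, (Bᴴ * B) i j * ⟪d i, d j⟫ := by
        rw [Finset.sum_comm]
        refine Finset.sum_congr rfl fun i _ => ?_
        rw [Finset.sum_comm]
        refine Finset.sum_congr rfl fun j _ => ?_
        simp [Matrix.mul_apply, Matrix.conjTranspose_apply, Finset.sum_mul]

theorem dirk_perturbed_one_step_bound
    {H : Type*} [NormedAddCommGroup H] [InnerProductSpace ℝ H]
    {s : ℕ}
    (f fε : H → H) (hf : ∀ x y : H, ⟪x - y, f x - f y⟫ ≤ 0)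
    (L : ℝ) (hLip : ∀ x y : H, ‖f x - f y‖ ≤ L * ‖x - y‖)
    (A : Matrix (Fin s) (Fin s) ℝ) (b : Fin s → ℝ)
    (hlow : ∀ i j : Fin s, i < j → A i j = 0)
    (hdiag : ∀ i : Fin s, 0 ≤ A i i)
    (hb : ∀ i : Fin s, 0 ≤ b i)
    (hM : (Matrix.diagonal b * A + Aᵀ * Matrix.diagonal b -
      Matrix.vecMulVec b b).PosSemidef)
    (Δt : ℝ) (hΔt : 0 < Δt)
    (ε : Fin s → ℝ)
    (zn yn zn1 yn1 : H) (z y : Fin s → H)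
    (hz : ∀ i : Fin s, z i = zn + Δt • ∑ j ∈ Finset.Iic i, A i j • f (z j))
    (hy : ∀ i : Fin s, y i = yn + Δt •
      (∑ j ∈ Finset.Iio i, A i j • f (y j) + A i i • fε (y i)))
    (hε : ∀ i : Fin s, ‖f (y i) - fε (y i)‖ ≤ ε i)
    (hzn1 : zn1 = zn + Δt • ∑ i : Fin s, b i • f (z i))
    (hyn1 : yn1 = yn + Δt • ∑ i : Fin s, b i • f (y i)) :
    ‖zn1 - yn1‖ ^ 2 ≤ ‖zn - yn‖ ^ 2 +
      2 * Δt ^ 2 * L * ∑ i : Fin s, ε i * b i * A i i * ‖z i - y i‖ := by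
  set d : Fin s → H := fun i => f (z i) - f (y i) with hd
  set g : Fin s → H := fun i => f (y i) - fε (y i) with hg
  -- stage difference formula
  have hsub : ∀ i : Fin s, z i - y i = (zn - yn) +
      Δt • ((∑ j ∈ Finset.Iic i, A i j • d j) + A i i • g i) := by
    intro i
    have h2 : Finset.Iic i = insert i (Finset.Iio i) := by
      ext j
      simp [Finset.mem_Iic, Finset.mem_Iio, le_iff_lt_or_eq, or_comm]
    have h1 : (∑ j ∈ Finset.Iic i, A i j • f (z j))
        - (∑ j ∈ Finset.Iio i, A i j • f (y j) + A i i • fε (y i))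
        = (∑ j ∈ Finset.Iic i, A i j • d j) + A i i • g i := by
      rw [h2, Finset.sum_insert (by simp), Finset.sum_insert (by simp)]
      simp only [hd, hg, smul_sub, Finset.sum_sub_distrib]
      abel
    rw [hz i, hy i, ← h1, smul_sub]
    abel
  -- output difference formula
  have hout : zn1 - yn1 = (zn - yn) + Δt • ∑ i, b i • d i := by
    rw [hzn1, hyn1]
    have : (∑ i : Fin s, b i • f (z i)) - (∑ i : Fin s, b i • f (y i))
        = ∑ i, b i • d i := by
      rw [← Finset.sum_sub_distrib]
      simp [hd, smul_sub]
    rw [← this, smul_sub]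
    abel
  -- abbreviations
  set T1 : ℝ := ∑ i, b i * ⟪z i - y i, d i⟫ with hT1def
  set T2 : ℝ := ∑ i, b i * ∑ j, A i j * ⟪d j, d i⟫ with hT2def
  set T3 : ℝ := ∑ i, b i * (A i i * ⟪g i, d i⟫) with hT3def
  set T4 : ℝ := ∑ i, ∑ j, (b i * b j) * ⟪d i, d j⟫ with hT4def
  -- inner product decomposition
  have hinner : ∀ i : Fin s, ⟪zn - yn, d i⟫ = ⟪z i - y i, d i⟫
      - Δt * ((∑ j, A i j * ⟪d j, d i⟫) + A i i * ⟪g i, d i⟫) := by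
    intro i
    have he0 : zn - yn = (z i - y i)
        - Δt • ((∑ j ∈ Finset.Iic i, A i j • d j) + A i i • g i) := by
      rw [hsub i]; abel
    have hfull : (∑ j ∈ Finset.Iic i, A i j * ⟪d j, d i⟫)
        = ∑ j, A i j * ⟪d j, d i⟫ := by
      refine Finset.sum_subset (Finset.subset_univ _) fun j _ hj => ?_
      have hij : i < j := by
        by_contra h
        exact hj (Finset.mem_Iic.mpr (not_lt.mp h))
      rw [hlow i j hij]; ring
    rw [he0, inner_sub_left, real_inner_smul_left, inner_add_left,
      sum_inner, real_inner_smul_left]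
    have : (∑ j ∈ Finset.Iic i, ⟪A i j • d j, d i⟫)
        = ∑ j, A i j * ⟪d j, d i⟫ := by
      rw [← hfull]
      exact Finset.sum_congr rfl fun j _ => real_inner_smul_left _ _ _
    rw [this]
  -- weighted sum of inner decomposition
  have hSI : (∑ i, b i * ⟪zn - yn, d i⟫) = T1 - Δt * T2 - Δt * T3 := by
    rw [hT1def, hT2def, hT3def, Finset.mul_sum, Finset.mul_sum,
      ← Finset.sum_sub_distrib, ← Finset.sum_sub_distrib]
    refine Finset.sum_congr rfl fun i _ => ?_
    rw [hinner i]
    ring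
  -- expansion of the squared norm
  have hexp : ‖zn1 - yn1‖ ^ 2 = ‖zn - yn‖ ^ 2
      + 2 * Δt * (T1 - Δt * T2 - Δt * T3) + Δt ^ 2 * T4 := by
    rw [hout, norm_add_sq_real]
    have h2 : ⟪zn - yn, Δt • ∑ i, b i • d i⟫
        = Δt * ∑ i, b i * ⟪zn - yn, d i⟫ := by
      rw [real_inner_smul_right, inner_sum]
      congr 1
      exact Finset.sum_congr rfl fun i _ => real_inner_smul_right _ _ _
    have h3 : ‖Δt • ∑ i, b i • d i‖ ^ 2 = Δt ^ 2 * T4 := by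
      rw [norm_smul, mul_pow, Real.norm_eq_abs, sq_abs]
      congr 1
      rw [← real_inner_self_eq_norm_sq, sum_inner, hT4def]
      refine Finset.sum_congr rfl fun i _ => ?_
      rw [real_inner_smul_left, inner_sum, Finset.mul_sum]
      refine Finset.sum_congr rfl fun j _ => ?_
      rw [real_inner_smul_right]
      ring
    rw [h2, h3, hSI]
    ring
  -- contractivity bound
  have hT1 : T1 ≤ 0 := by
    refine Finset.sum_nonpos fun i _ => ?_
    exact mul_nonpos_of_nonneg_of_nonpos (hb i) (hf (z i) (y i))
  -- PSD bound : T4 ≤ 2 * T2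
  have hgram := gram_psd_aux _ hM d
  have hMsum : (∑ i, ∑ j, (Matrix.diagonal b * A + Aᵀ * Matrix.diagonal b -
      Matrix.vecMulVec b b) i j * ⟪d i, d j⟫) = 2 * T2 - T4 := by
    have hsplit : ∀ i j : Fin s, (Matrix.diagonal b * A + Aᵀ * Matrix.diagonal b -
        Matrix.vecMulVec b b) i j * ⟪d i, d j⟫
        = (b i * A i j) * ⟪d j, d i⟫ + (A j i * b j) * ⟪d i, d j⟫
          - (b i * b j) * ⟪d i, d j⟫ := by
      intro i j
      rw [Matrix.sub_apply, Matrix.add_apply, Matrix.mul_diagonal,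
        Matrix.diagonal_mul, Matrix.transpose_apply, Matrix.vecMulVec_apply,
        real_inner_comm (d i) (d j)]
      ring
    calc (∑ i, ∑ j, (Matrix.diagonal b * A + Aᵀ * Matrix.diagonal b -
        Matrix.vecMulVec b b) i j * ⟪d i, d j⟫)
        = ∑ i, ∑ j, ((b i * A i j) * ⟪d j, d i⟫ + (A j i * b j) * ⟪d i, d j⟫
          - (b i * b j) * ⟪d i, d j⟫) := by
          exact Finset.sum_congr rfl fun i _ =>
            Finset.sum_congr rfl fun j _ => hsplit i j
      _ = (∑ i, ∑ j, (b i * A i j) * ⟪d j, d i⟫)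
          + (∑ i, ∑ j, (A j i * b j) * ⟪d i, d j⟫)
          - ∑ i, ∑ j, (b i * b j) * ⟪d i, d j⟫ := by
          simp [Finset.sum_add_distrib, Finset.sum_sub_distrib]
      _ = T2 + T2 - T4 := by
          congr 1
          congr 1
          · rw [hT2def]
            refine Finset.sum_congr rfl fun i _ => ?_
            rw [Finset.mul_sum]
            exact Finset.sum_congr rfl fun j _ => by ring
          · rw [Finset.sum_comm, hT2def]
            refine Finset.sum_congr rfl fun i _ => ?_
            rw [Finset.mul_sum]
            refine Finset.sum_congr rfl fun j _ => ?_
            rw [real_inner_comm]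
            ring
      _ = 2 * T2 - T4 := by ring
  have h2T : T4 ≤ 2 * T2 := by
    rw [hMsum] at hgram
    linarith
  -- perturbation bound
  have hT3 : -T3 ≤ L * ∑ i, ε i * b i * A i i * ‖z i - y i‖ := by
    have hper : ∀ i : Fin s, -(b i * (A i i * ⟪g i, d i⟫))
        ≤ b i * A i i * (ε i * (L * ‖z i - y i‖)) := by
      intro i
      have h1 : -⟪g i, d i⟫ ≤ ‖g i‖ * ‖d i‖ :=
        (neg_le_abs _).trans (abs_real_inner_le_norm _ _)
      have h2 : ‖g i‖ * ‖d i‖ ≤ ε i * (L * ‖z i - y i‖) :=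
        mul_le_mul (hε i) (hLip (z i) (y i)) (norm_nonneg _)
          ((norm_nonneg _).trans (hε i))
      have h3 : -⟪g i, d i⟫ ≤ ε i * (L * ‖z i - y i‖) := h1.trans h2
      have h4 : 0 ≤ b i * A i i := mul_nonneg (hb i) (hdiag i)
      calc -(b i * (A i i * ⟪g i, d i⟫)) = (b i * A i i) * (-⟪g i, d i⟫) := by ring
        _ ≤ (b i * A i i) * (ε i * (L * ‖z i - y i‖)) :=
            mul_le_mul_of_nonneg_left h3 h4
    calc -T3 = ∑ i, -(b i * (A i i * ⟪g i, d i⟫)) := by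
          rw [hT3def, ← Finset.sum_neg_distrib]
      _ ≤ ∑ i, b i * A i i * (ε i * (L * ‖z i - y i‖)) :=
          Finset.sum_le_sum fun i _ => hper i
      _ = L * ∑ i, ε i * b i * A i i * ‖z i - y i‖ := by
          rw [Finset.mul_sum]
          exact Finset.sum_congr rfl fun i _ => by ring
  -- combine
  have hA1 : 2 * Δt * T1 ≤ 0 :=
    mul_nonpos_of_nonneg_of_nonpos (by positivity) hT1
  have hA2 : 0 ≤ Δt ^ 2 * (2 * T2 - T4) :=
    mul_nonneg (by positivity) (by linarith)
  have hA3 : (2 * Δt ^ 2) * (-T3) ≤ (2 * Δt ^ 2) *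
      (L * ∑ i, ε i * b i * A i i * ‖z i - y i‖) :=
    mul_le_mul_of_nonneg_left hT3 (by positivity)
  rw [hexp]
  nlinarith [hA1, hA2, hA3]
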